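/- Let p and e be primes with p > 2 and e > 2, and let H = H(F_{p^e}) be the Heisenberg group with commutator subgroup H'. For every proper subgroup N of H' with |H' : N| = p^g, there exist g linearly independent e×e matrices L_1, …, L_g over Z_p such that H/N is isomorphic to B(L_1, …, L_g). In particular, any two quotients H/N₁ and H/N₂ with N₁, N₂ ≤ H' of index p in H' are isomorphic (all genus-1 quotients of H are isomorphic). -/

import Mathlib

/-- The Heisenberg group over a field `K`: underlying set `K × K × K` with
multiplication `(α,β,γ)·(α',β',γ') = (α+α', β+β', γ+γ'+α·β')`. -/
def Heisenberg (K : Type) [Field K] : Type := K × K × K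

namespace Heisenberg

variable {K : Type} [Field K]

instance : Mul (Heisenberg K) :=
  ⟨fun a b => (a.1 + b.1, a.2.1 + b.2.1, a.2.2 + b.2.2 + a.1 * b.2.1)⟩

instance : One (Heisenberg K) := ⟨((0 : K), (0 : K), (0 : K))⟩

instance : Inv (Heisenberg K) :=
  ⟨fun a => (-a.1, -a.2.1, -a.2.2 + a.1 * a.2.1)⟩

lemma mul_def (a b : Heisenberg K) :
    a * b = (a.1 + b.1, a.2.1 + b.2.1, a.2.2 + b.2.2 + a.1 * b.2.1) := rfl

lemma one_def : (1 : Heisenberg K) = ((0 : K), (0 : K), (0 : K)) := rfl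

lemma inv_def (a : Heisenberg K) : a⁻¹ = (-a.1, -a.2.1, -a.2.2 + a.1 * a.2.1) := rfl

instance : Group (Heisenberg K) where
  mul := (· * ·)
  one := 1
  inv := (·⁻¹)
  mul_assoc a b c := by
    show (a * b) * c = a * (b * c)
    rw [mul_def (a * b), mul_def a b, mul_def a (b * c), mul_def b c]
    refine Prod.ext ?_ (Prod.ext ?_ ?_) <;> (try dsimp only) <;> ring
  one_mul a := by
    show 1 * a = a
    simp only [mul_def]
    simp only [one_def]
    refine Prod.ext ?_ (Prod.ext ?_ ?_) <;> (try dsimp only) <;> ring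
  mul_one a := by
    show a * 1 = a
    simp only [mul_def]
    simp only [one_def]
    refine Prod.ext ?_ (Prod.ext ?_ ?_) <;> (try dsimp only) <;> ring
  inv_mul_cancel a := by
    show a⁻¹ * a = 1
    simp only [mul_def]
    simp only [one_def, inv_def]
    refine Prod.ext ?_ (Prod.ext ?_ ?_) <;> (try dsimp only) <;> ring

instance [Finite K] : Finite (Heisenberg K) := inferInstanceAs (Finite (K × K × K))

end Heisenberg

open Matrix in
/-- The Brahana-Baer group `B(L 0, …, L (t-1))` determined by a family of `r × s`
matrices over `ZMod p`: underlying set `(ZMod p)^r × (ZMod p)^s × (ZMod p)^t` with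
multiplication `(a,b,c)·(a',b',c') = (a+a', b+b', c+c'+(a L₁ b'ᵀ, …, a L_t b'ᵀ))`. -/
def BGroup (p r s t : ℕ) (L : Fin t → Matrix (Fin r) (Fin s) (ZMod p)) : Type :=
  (Fin r → ZMod p) × (Fin s → ZMod p) × (Fin t → ZMod p)

namespace BGroup

open Matrix

variable {p r s t : ℕ} {L : Fin t → Matrix (Fin r) (Fin s) (ZMod p)}

instance : Mul (BGroup p r s t L) :=
  ⟨fun x y => (x.1 + y.1, x.2.1 + y.2.1,
    fun i => x.2.2 i + y.2.2 i + x.1 ⬝ᵥ (L i).mulVec y.2.1)⟩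

instance : One (BGroup p r s t L) := ⟨(0, 0, 0)⟩

instance : Inv (BGroup p r s t L) :=
  ⟨fun x => (-x.1, -x.2.1, fun i => -x.2.2 i + x.1 ⬝ᵥ (L i).mulVec x.2.1)⟩

lemma mul_def (x y : BGroup p r s t L) :
    x * y = (x.1 + y.1, x.2.1 + y.2.1,
      fun i => x.2.2 i + y.2.2 i + x.1 ⬝ᵥ (L i).mulVec y.2.1) := rfl

lemma one_def : (1 : BGroup p r s t L) = (0, 0, 0) := rfl

lemma inv_def (x : BGroup p r s t L) :
    x⁻¹ = (-x.1, -x.2.1, fun i => -x.2.2 i + x.1 ⬝ᵥ (L i).mulVec x.2.1) := rfl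

instance : Group (BGroup p r s t L) where
  mul := (· * ·)
  one := 1
  inv := (·⁻¹)
  mul_assoc x y z := by
    show (x * y) * z = x * (y * z)
    rw [mul_def (x * y), mul_def x y, mul_def x (y * z), mul_def y z]
    refine Prod.ext ?_ (Prod.ext ?_ ?_) <;> (try dsimp only)
    · abel
    · abel
    · funext i
      simp [Matrix.mulVec_add, dotProduct_add, add_dotProduct]
      ring
  one_mul x := by
    show 1 * x = x
    simp only [mul_def]
    simp only [one_def]
    refine Prod.ext ?_ (Prod.ext ?_ ?_) <;> (try dsimp only)
    · abel
    · abel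
    · funext i
      simp [zero_dotProduct]
  mul_one x := by
    show x * 1 = x
    simp only [mul_def]
    simp only [one_def]
    refine Prod.ext ?_ (Prod.ext ?_ ?_) <;> (try dsimp only)
    · abel
    · abel
    · funext i
      simp [Matrix.mulVec_zero]
  inv_mul_cancel x := by
    show x⁻¹ * x = 1
    simp only [mul_def]
    simp only [one_def, inv_def]
    refine Prod.ext ?_ (Prod.ext ?_ ?_) <;> (try dsimp only)
    · abel
    · abel
    · funext i
      simp [neg_dotProduct]

instance [NeZero p] : Finite (BGroup p r s t L) :=
  inferInstanceAs (Finite (_ × _ × _))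

end BGroup

section HeisAux

open Heisenberg Matrix

variable {K : Type} [Field K]

/-- The subgroup `{(0,0,γ)}` of the Heisenberg group. -/
def Hcenter (K : Type) [Field K] : Subgroup (Heisenberg K) where
  carrier := {x | x.1 = 0 ∧ x.2.1 = 0}
  mul_mem' := by
    rintro a b ⟨ha1, ha2⟩ ⟨hb1, hb2⟩
    exact ⟨by simp [Heisenberg.mul_def, ha1, hb1], by simp [Heisenberg.mul_def, ha2, hb2]⟩
  one_mem' := ⟨rfl, rfl⟩
  inv_mem' := by
    rintro a ⟨h1, h2⟩
    exact ⟨by simp [Heisenberg.inv_def, h1], by simp [Heisenberg.inv_def, h2]⟩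

lemma mem_Hcenter {x : Heisenberg K} : x ∈ Hcenter K ↔ x.1 = 0 ∧ x.2.1 = 0 := Iff.rfl

lemma heis_commutator_eq : commutator (Heisenberg K) = Hcenter K := by
  apply le_antisymm
  · rw [commutator_def, Subgroup.commutator_le]
    intro g₁ _ g₂ _
    rw [commutatorElement_def]
    refine ⟨?_, ?_⟩ <;> rw [Heisenberg.mul_def (g₁ * g₂ * g₁⁻¹), Heisenberg.mul_def (g₁ * g₂), Heisenberg.mul_def g₁ g₂, Heisenberg.inv_def g₁, Heisenberg.inv_def g₂] <;> (try dsimp only) <;> ring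
  · intro x hx
    obtain ⟨h1, h2⟩ := mem_Hcenter.mp hx
    set a : Heisenberg K := ((1:K), (0:K), (0:K)) with ha
    set b : Heisenberg K := ((0:K), x.2.2, (0:K)) with hb
    have hmem : a * b * a⁻¹ * b⁻¹ ∈ ⁅(⊤ : Subgroup (Heisenberg K)), ⊤⁆ :=
      commutatorElement_def a b ▸
        Subgroup.commutator_mem_commutator (Subgroup.mem_top a) (Subgroup.mem_top b)
    have hx2 : x = a * b * a⁻¹ * b⁻¹ := by
      rw [Heisenberg.mul_def (a * b * a⁻¹), Heisenberg.mul_def (a * b), Heisenberg.mul_def a b, Heisenberg.inv_def a, Heisenberg.inv_def b]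
      simp only [ha, hb]
      refine Prod.ext ?_ (Prod.ext ?_ ?_)
      · rw [h1]; ring
      · rw [h2]; ring
      · ring
    rw [commutator_def, hx2]
    exact hmem

theorem bgroup_equiv_one {p r : ℕ} (L₁ L₂ : Fin 1 → Matrix (Fin r) (Fin r) (ZMod p))
    (h₁ : IsUnit (L₁ 0)) (h₂ : IsUnit (L₂ 0)) :
    Nonempty (BGroup p r r 1 L₁ ≃* BGroup p r r 1 L₂) := by
  classical
  have hd₁ : IsUnit (L₁ 0).det := (Matrix.isUnit_iff_isUnit_det _).mp h₁
  have hd₂ : IsUnit (L₂ 0).det := (Matrix.isUnit_iff_isUnit_det _).mp h₂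
  set M : Matrix (Fin r) (Fin r) (ZMod p) := L₁ 0 * (L₂ 0)⁻¹ with hM
  set M' : Matrix (Fin r) (Fin r) (ZMod p) := L₂ 0 * (L₁ 0)⁻¹ with hM'
  have hMM' : M * M' = 1 := by
    rw [hM, hM', Matrix.mul_assoc, ← Matrix.mul_assoc ((L₂ 0)⁻¹),
      Matrix.nonsing_inv_mul _ hd₂, Matrix.one_mul, Matrix.mul_nonsing_inv _ hd₁]
  have hM'M : M' * M = 1 := by
    rw [hM, hM', Matrix.mul_assoc, ← Matrix.mul_assoc ((L₁ 0)⁻¹),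
      Matrix.nonsing_inv_mul _ hd₁, Matrix.one_mul, Matrix.mul_nonsing_inv _ hd₂]
  have hML : M * L₂ 0 = L₁ 0 := by
    rw [hM, Matrix.mul_assoc, Matrix.nonsing_inv_mul _ hd₂, Matrix.mul_one]
  refine ⟨{ toFun := fun x => (Matrix.vecMul x.1 M, x.2.1, x.2.2),
            invFun := fun x => (Matrix.vecMul x.1 M', x.2.1, x.2.2),
            left_inv := ?_, right_inv := ?_, map_mul' := ?_ }⟩
  · intro x
    refine Prod.ext ?_ rfl
    show Matrix.vecMul (Matrix.vecMul x.1 M) M' = x.1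
    rw [Matrix.vecMul_vecMul, hMM', Matrix.vecMul_one]
  · intro x
    refine Prod.ext ?_ rfl
    show Matrix.vecMul (Matrix.vecMul x.1 M') M = x.1
    rw [Matrix.vecMul_vecMul, hM'M, Matrix.vecMul_one]
  · intro x y
    simp only [BGroup.mul_def]
    refine Prod.ext ?_ (Prod.ext rfl ?_) <;> dsimp
    · rw [Matrix.add_vecMul]; rfl
    · funext i
      have hi : i = 0 := Subsingleton.elim i 0
      subst hi
      congr 1
      rw [← Matrix.dotProduct_mulVec, Matrix.mulVec_mulVec, hML]

end HeisAux
open Matrix in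
set_option maxHeartbeats 1000000 in
theorem heis_main (p e : ℕ) (hp : p.Prime) (he0 : 0 < e)
    (K : Type) [Field K] [Fintype K] (hK : Fintype.card K = p ^ e)
    (N : Subgroup (Heisenberg K)) (hn : N.Normal) (g : ℕ)
    (hle : N ≤ commutator (Heisenberg K))
    (hidx : N.relIndex (commutator (Heisenberg K)) = p ^ g) :
    ∃ L : Fin g → Matrix (Fin e) (Fin e) (ZMod p),
      (∀ c : Fin g → ZMod p, c ≠ 0 → IsUnit (∑ i, c i • L i)) ∧
      Nonempty ((Heisenberg K ⧸ N) ≃* BGroup p e e g L) := by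
  classical
  haveI : Fact p.Prime := ⟨hp⟩
  -- characteristic of K is p
  have hchar : CharP K p := by
    obtain ⟨m, hrp, hcard⟩ := FiniteField.card K (ringChar K)
    have hpow : p ^ e = ringChar K ^ (m : ℕ) := by rw [← hK, hcard]
    have hdvd : p ∣ ringChar K ^ (m : ℕ) := hpow ▸ dvd_pow_self p he0.ne'
    have hpr : ringChar K = p :=
      ((Nat.prime_dvd_prime_iff_eq hp hrp).mp (hp.dvd_of_dvd_pow hdvd)).symm
    exact hpr ▸ ringChar.charP K
  haveI := hchar
  letI : Algebra (ZMod p) K := ZMod.algebra K p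
  -- dimension of K over ZMod p
  have hfr : Module.finrank (ZMod p) K = e := by
    have h1 : Fintype.card K = p ^ Module.finrank (ZMod p) K := by
      have := Module.card_eq_pow_finrank (K := ZMod p) (V := K)
      rwa [ZMod.card] at this
    have h2 : p ^ e = p ^ Module.finrank (ZMod p) K := by rw [← hK]; exact h1
    exact (Nat.pow_right_injective hp.two_le h2).symm
  let bK : Module.Basis (Fin e) (ZMod p) K := Module.finBasisOfFinrankEq (ZMod p) K hfr
  -- the subgroup N corresponds to a submodule W of K
  have hmemC : ∀ x : Heisenberg K, x ∈ commutator (Heisenberg K) ↔ x.1 = 0 ∧ x.2.1 = 0 := by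
    intro x; rw [heis_commutator_eq]; exact Iff.rfl
  let Wadd : AddSubgroup K :=
    { carrier := {γ | (((0:K), (0:K), γ) : Heisenberg K) ∈ N}
      zero_mem' := N.one_mem
      add_mem' := by
        intro a b ha hb
        have h := N.mul_mem ha hb
        change ((0 + 0, 0 + 0, a + b + 0 * 0) : Heisenberg K) ∈ N at h
        simpa using h
      neg_mem' := by
        intro a ha
        have h := N.inv_mem ha
        change ((-0, -0, -a + 0 * 0) : Heisenberg K) ∈ N at h
        simpa using h }
  let W : Submodule (ZMod p) K := AddSubgroup.toZModSubmodule p Wadd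
  have hmemW : ∀ γ : K, γ ∈ W ↔ (((0:K), (0:K), γ) : Heisenberg K) ∈ N := fun γ => Iff.rfl
  have hNmem : ∀ x : Heisenberg K, x ∈ N ↔ x.1 = 0 ∧ x.2.1 = 0 ∧ x.2.2 ∈ W := by
    intro x
    constructor
    · intro hx
      obtain ⟨h1, h2⟩ := (hmemC x).mp (hle hx)
      refine ⟨h1, h2, ?_⟩
      rw [hmemW]
      have hxe : x = (((0:K), (0:K), x.2.2) : Heisenberg K) :=
        Prod.ext h1 (Prod.ext h2 rfl)
      rwa [← hxe]
    · rintro ⟨h1, h2, h3⟩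
      have hxe : x = (((0:K), (0:K), x.2.2) : Heisenberg K) :=
        Prod.ext h1 (Prod.ext h2 rfl)
      rw [hxe]
      exact (hmemW _).mp h3
  -- cardinality of the quotient K ⧸ W
  have eZ : ↥(commutator (Heisenberg K)) ≃ K :=
    { toFun := fun z => z.1.2.2
      invFun := fun γ => ⟨((0:K),(0:K),γ), (hmemC _).mpr ⟨rfl, rfl⟩⟩
      left_inv := fun z => Subtype.ext (by
        show ((0:K), (0:K), ((z.1.2.2 : K))) = z.1
        have hxe : z.1 = (((0:K), (0:K), z.1.2.2) : Heisenberg K) :=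
          Prod.ext ((hmemC z.1).mp z.2).1 (Prod.ext ((hmemC z.1).mp z.2).2 rfl)
        exact hxe.symm)
      right_inv := fun γ => rfl }
  have eN : ↥N ≃ ↥W :=
    { toFun := fun n => ⟨n.1.2.2, ((hNmem _).mp n.2).2.2⟩
      invFun := fun γ => ⟨((0:K),(0:K),γ.1), (hNmem _).mpr ⟨rfl, rfl, γ.2⟩⟩
      left_inv := fun n => Subtype.ext (by
        show ((0:K), (0:K), ((n.1.2.2 : K))) = n.1
        have hxe : n.1 = (((0:K), (0:K), n.1.2.2) : Heisenberg K) :=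
          Prod.ext ((hNmem n.1).mp n.2).1 (Prod.ext ((hNmem n.1).mp n.2).2.1 rfl)
        exact hxe.symm)
      right_inv := fun γ => rfl }
  have hcardQ : Nat.card (K ⧸ W) = p ^ g := by
    have h1 : Nat.card K = Nat.card W * Nat.card (K ⧸ W) :=
      Submodule.card_eq_card_quotient_mul_card W
    have h2 := Subgroup.card_eq_card_quotient_mul_card_subgroup
      (N.subgroupOf (commutator (Heisenberg K)))
    have h3 : Nat.card (↥(commutator (Heisenberg K)) ⧸ N.subgroupOf (commutator (Heisenberg K)))
        = p ^ g := by
      rw [← Subgroup.index_eq_card]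
      exact hidx
    have h4 : Nat.card ↥(commutator (Heisenberg K)) = Nat.card K := Nat.card_congr eZ
    have h5 : Nat.card ↥(N.subgroupOf (commutator (Heisenberg K))) = Nat.card W := by
      rw [Nat.card_congr (Subgroup.subgroupOfEquivOfLe hle).toEquiv, Nat.card_congr eN]
    rw [h3, h4, h5, h1] at h2
    have hW0 : 0 < Nat.card W := Nat.card_pos
    rw [mul_comm (p ^ g)] at h2
    exact Nat.eq_of_mul_eq_mul_left hW0 h2
  -- basis of the quotient
  haveI : Fintype (K ⧸ W) := Fintype.ofFinite _
  have hfrq : Module.finrank (ZMod p) (K ⧸ W) = g := by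
    have h1 : Fintype.card (K ⧸ W) = p ^ Module.finrank (ZMod p) (K ⧸ W) := by
      have := Module.card_eq_pow_finrank (K := ZMod p) (V := K ⧸ W)
      rwa [ZMod.card] at this
    have h2 : p ^ g = p ^ Module.finrank (ZMod p) (K ⧸ W) := by
      rw [← hcardQ, Nat.card_eq_fintype_card, h1]
    exact (Nat.pow_right_injective hp.two_le h2).symm
  let bQ : Module.Basis (Fin g) (ZMod p) (K ⧸ W) := Module.finBasisOfFinrankEq (ZMod p) (K ⧸ W) hfrq
  -- the linear functionals and matrices
  let f : Fin g → (K →ₗ[ZMod p] ZMod p) :=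
    fun i => (LinearMap.proj i).comp (bQ.equivFun.toLinearMap.comp W.mkQ)
  have hfapp : ∀ (i) (γ : K), f i γ = bQ.equivFun (Submodule.Quotient.mk γ) i := fun i γ => rfl
  let L : Fin g → Matrix (Fin e) (Fin e) (ZMod p) :=
    fun i => Matrix.of (fun j k => f i (bK j * bK k))
  have key : ∀ (i) (α β : K),
      f i (α * β) = bK.equivFun α ⬝ᵥ (L i) *ᵥ (bK.equivFun β) := by
    intro i α β
    calc f i (α * β)
        = f i ((∑ j, bK.equivFun α j • bK j) * (∑ k, bK.equivFun β k • bK k)) := by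
          rw [bK.sum_equivFun, bK.sum_equivFun]
      _ = ∑ j, ∑ k, bK.equivFun α j * (f i (bK j * bK k) * bK.equivFun β k) := by
          rw [Finset.sum_mul_sum, map_sum]
          refine Finset.sum_congr rfl fun j _ => ?_
          rw [map_sum]
          refine Finset.sum_congr rfl fun k _ => ?_
          rw [smul_mul_smul_comm, _root_.map_smul, smul_eq_mul]
          ring
      _ = bK.equivFun α ⬝ᵥ (L i) *ᵥ (bK.equivFun β) := by
          simp only [dotProduct, Matrix.mulVec, L, Matrix.of_apply, Finset.mul_sum]
  -- the homomorphism
  let Φ : Heisenberg K → BGroup p e e g L :=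
    fun x => (bK.equivFun x.1, bK.equivFun x.2.1, fun i => f i x.2.2)
  let Φh : Heisenberg K →* BGroup p e e g L := MonoidHom.mk' Φ (by
    intro x y
    simp only [Φ, Heisenberg.mul_def, BGroup.mul_def]
    refine Prod.ext ?_ (Prod.ext ?_ ?_)
    · show bK.equivFun (x.1 + y.1) = bK.equivFun x.1 + bK.equivFun y.1
      rw [map_add]
    · show bK.equivFun (x.2.1 + y.2.1) = bK.equivFun x.2.1 + bK.equivFun y.2.1
      rw [map_add]
    · show (fun i => f i (x.2.2 + y.2.2 + x.1 * y.2.1))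
          = fun i => f i x.2.2 + f i y.2.2 + bK.equivFun x.1 ⬝ᵥ (L i) *ᵥ bK.equivFun y.2.1
      funext i
      rw [map_add, map_add, key])
  have hker : Φh.ker = N := by
    ext x
    rw [MonoidHom.mem_ker]
    constructor
    · intro hx
      have h1 : bK.equivFun x.1 = 0 := congrArg Prod.fst hx
      have h2 : bK.equivFun x.2.1 = 0 := congrArg (fun z => z.2.1) hx
      have h3 : ∀ i, f i x.2.2 = 0 := fun i => congrFun (congrArg (fun z => z.2.2) hx) i
      refine (hNmem x).mpr ⟨?_, ?_, ?_⟩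
      · exact bK.equivFun.map_eq_zero_iff.mp h1
      · exact bK.equivFun.map_eq_zero_iff.mp h2
      · have h4 : bQ.equivFun (Submodule.Quotient.mk x.2.2) = 0 := funext fun i => h3 i
        have h5 : (Submodule.Quotient.mk x.2.2 : K ⧸ W) = 0 :=
          bQ.equivFun.map_eq_zero_iff.mp h4
        exact (Submodule.Quotient.mk_eq_zero W).mp h5
    · intro hx
      obtain ⟨h1, h2, h3⟩ := (hNmem x).mp hx
      show Φ x = 1
      have hz : (Submodule.Quotient.mk x.2.2 : K ⧸ W) = 0 :=
        (Submodule.Quotient.mk_eq_zero W).mpr h3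
      refine Prod.ext ?_ (Prod.ext ?_ ?_)
      · show bK.equivFun x.1 = 0
        rw [h1, map_zero]
      · show bK.equivFun x.2.1 = 0
        rw [h2, map_zero]
      · show (fun i => f i x.2.2) = 0
        funext i
        show f i x.2.2 = 0
        rw [hfapp, hz]
        simp
  have hsurj : Function.Surjective Φh := by
    intro y
    obtain ⟨γ, hγ⟩ := Submodule.Quotient.mk_surjective W (bQ.equivFun.symm y.2.2)
    refine ⟨(bK.equivFun.symm y.1, bK.equivFun.symm y.2.1, γ), ?_⟩
    show Φ _ = y
    refine Prod.ext ?_ (Prod.ext ?_ ?_) <;> dsimp [Φ]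
    · exact bK.equivFun.apply_symm_apply y.1
    · exact bK.equivFun.apply_symm_apply y.2.1
    · funext i
      rw [hfapp, hγ, bQ.equivFun.apply_symm_apply]
  have equiv : (Heisenberg K ⧸ N) ≃* BGroup p e e g L :=
    (QuotientGroup.quotientMulEquivOfEq hker.symm).trans
      (QuotientGroup.quotientKerEquivOfSurjective Φh hsurj)
  -- invertibility of nonzero combinations
  refine ⟨L, ?_, ⟨equiv⟩⟩
  intro c hc
  rw [Matrix.isUnit_iff_isUnit_det, isUnit_iff_ne_zero]
  intro hdet
  obtain ⟨v, hv0, hvv⟩ := (Matrix.exists_mulVec_eq_zero_iff).mpr hdet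
  set β : K := bK.equivFun.symm v with hβ
  have hvβ : bK.equivFun β = v := bK.equivFun.apply_symm_apply v
  have hβ0 : β ≠ 0 := by
    intro h
    apply hv0
    rw [← hvβ, h, map_zero]
  have hdotsum : ∀ u : Fin e → ZMod p,
      u ⬝ᵥ ((∑ i, c i • L i) *ᵥ v) = ∑ i, c i * (u ⬝ᵥ (L i) *ᵥ v) := by
    intro u
    have hMsum : ((∑ i, c i • L i) *ᵥ v) = ∑ i, c i • ((L i) *ᵥ v) := by
      funext a
      simp only [Matrix.mulVec, dotProduct, Finset.sum_apply, Matrix.sum_apply,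
        Matrix.smul_apply, Pi.smul_apply, smul_eq_mul, Finset.sum_mul, Finset.mul_sum]
      rw [Finset.sum_comm]
      exact Finset.sum_congr rfl fun i _ => Finset.sum_congr rfl fun b _ => by ring
    rw [hMsum]
    simp only [dotProduct, Finset.sum_apply, Pi.smul_apply, smul_eq_mul,
      Finset.mul_sum, Finset.sum_mul]
    rw [Finset.sum_comm]
    refine Finset.sum_congr rfl fun i _ => Finset.sum_congr rfl fun a _ => by ring
  have hphi : ∀ γ : K, (∑ i, c i * bQ.equivFun (Submodule.Quotient.mk γ) i) = 0 := by
    intro γ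
    have hγ : γ = (γ * β⁻¹) * β := by
      rw [mul_assoc, inv_mul_cancel₀ hβ0, mul_one]
    rw [hγ]
    have h1 : ∀ i, bQ.equivFun (Submodule.Quotient.mk ((γ * β⁻¹) * β) : K ⧸ W) i
        = bK.equivFun (γ * β⁻¹) ⬝ᵥ (L i) *ᵥ v := by
      intro i
      rw [← hfapp, key, hvβ]
    calc ∑ i, c i * bQ.equivFun (Submodule.Quotient.mk ((γ * β⁻¹) * β) : K ⧸ W) i
        = ∑ i, c i * (bK.equivFun (γ * β⁻¹) ⬝ᵥ (L i) *ᵥ v) := by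
          exact Finset.sum_congr rfl fun i _ => by rw [h1]
      _ = bK.equivFun (γ * β⁻¹) ⬝ᵥ ((∑ i, c i • L i) *ᵥ v) := (hdotsum _).symm
      _ = 0 := by rw [hvv, dotProduct_zero]
  obtain ⟨i₀, hi₀⟩ := Function.ne_iff.mp hc
  obtain ⟨γ₀, hγ₀⟩ := Submodule.Quotient.mk_surjective W (bQ i₀)
  have h := hphi γ₀
  rw [hγ₀] at h
  simp only [Module.Basis.equivFun_self, mul_ite, mul_one, mul_zero] at h
  rw [Finset.sum_ite_eq Finset.univ i₀ c] at h
  simp at h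
  exact hi₀ h
/-- **Brahana correspondence.** For every proper subgroup `N` of the
commutator subgroup `H'` of the Heisenberg group `H = H(F_{p^e})` with
`|H' : N| = p^g`, there are `g` linearly independent `e × e` matrices `L` over `Z_p`
with `H/N ≅ B(L 0, …, L (g-1))`.  In particular all genus-1 quotients of `H`
(those with `|H' : N| = p`) are isomorphic. -/
theorem heisenberg_quotient_brahana
    (p e : ℕ) (hp : p.Prime) (he : e.Prime) (hp2 : 2 < p) (he2 : 2 < e)
    (K : Type) [Field K] [Fintype K] (hK : Fintype.card K = p ^ e) :
    (∀ (N : Subgroup (Heisenberg K)) (hn : N.Normal) (g : ℕ),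
      N < commutator (Heisenberg K) →
      N.relIndex (commutator (Heisenberg K)) = p ^ g →
      ∃ L : Fin g → Matrix (Fin e) (Fin e) (ZMod p),
        LinearIndependent (ZMod p) L ∧
        Nonempty ((Heisenberg K ⧸ N) ≃* BGroup p e e g L)) ∧
    (∀ (N₁ N₂ : Subgroup (Heisenberg K)) (hn₁ : N₁.Normal) (hn₂ : N₂.Normal),
      N₁ ≤ commutator (Heisenberg K) → N₂ ≤ commutator (Heisenberg K) →
      N₁.relIndex (commutator (Heisenberg K)) = p →
      N₂.relIndex (commutator (Heisenberg K)) = p →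
      Nonempty ((Heisenberg K ⧸ N₁) ≃* (Heisenberg K ⧸ N₂))) := by

  have he0 : 0 < e := by omega
  haveI : Fact p.Prime := ⟨hp⟩
  constructor
  · intro N hn g hlt hidx
    obtain ⟨L, hU, hiso⟩ := heis_main p e hp he0 K hK N hn g hlt.le hidx
    refine ⟨L, ?_, hiso⟩
    rw [Fintype.linearIndependent_iff]
    intro c hsum i
    by_contra hci
    have hc0 : c ≠ 0 := fun h => hci (by rw [h]; rfl)
    have hU' := hU c hc0
    rw [hsum, Matrix.isUnit_iff_isUnit_det] at hU'
    haveI : Nonempty (Fin e) := ⟨⟨0, he0⟩⟩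
    rw [Matrix.det_zero] at hU'
    exact zero_ne_one (isUnit_zero_iff.mp hU')
  · intro N₁ N₂ hn₁ hn₂ h₁ h₂ hi₁ hi₂
    obtain ⟨L₁, hU₁, ⟨iso₁⟩⟩ := heis_main p e hp he0 K hK N₁ hn₁ 1 h₁ (by rw [hi₁, pow_one])
    obtain ⟨L₂, hU₂, ⟨iso₂⟩⟩ := heis_main p e hp he0 K hK N₂ hn₂ 1 h₂ (by rw [hi₂, pow_one])
    have hc : (fun _ : Fin 1 => (1 : ZMod p)) ≠ 0 := fun h => one_ne_zero (congrFun h 0)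
    have hU₁' := hU₁ _ hc
    have hU₂' := hU₂ _ hc
    rw [Fin.sum_univ_one, one_smul] at hU₁' hU₂'
    obtain ⟨eB⟩ := bgroup_equiv_one L₁ L₂ hU₁' hU₂'
    exact ⟨iso₁.trans (eB.trans iso₂.symm)⟩
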